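/- arXiv:2203.00643 — 5 statements merged into one kernel-verified Lean document; each statement's English description precedes it below -/
import Mathlib

section
/- The map H from partitions of {0,1,...,n} to subsets of {1,...,n}, defined by sending a partition {U_1,...,U_k} to the union of the sets U_i \ {min U_i}, is surjective. -/
/-- The map `H` sending a partition of `{0,1,...,n}` to the union of the sets
`U \ {min U}` over its blocks `U`. -/
def H {n : ℕ} (P : Finpartition (Finset.range (n + 1))) : Finset ℕ :=
  P.parts.attach.sup fun U => U.1.erase (U.1.min' (P.nonempty_of_mem_parts U.2))

theorem stmt_1 (n : ℕ) (A : Finset ℕ) (hA : A ⊆ Finset.Icc 1 n) :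
    ∃ P : Finpartition (Finset.range (n + 1)), H P = A := by
  classical
  set B : Finset ℕ := insert 0 A with hB
  have hBsub : B ⊆ Finset.range (n + 1) := by
    intro x hx
    rcases Finset.mem_insert.1 hx with h | h
    · simp [h]
    · have := hA h
      simp only [Finset.mem_Icc] at this
      simp [Finset.mem_range]; omega
  set parts : Finset (Finset ℕ) :=
    insert B ((Finset.range (n + 1) \ B).image ({·} : ℕ → Finset ℕ)) with hparts
  have hmem : ∀ p ∈ parts, p = B ∨ ∃ x ∈ Finset.range (n + 1) \ B, p = {x} := by
    intro p hp
    rcases Finset.mem_insert.1 hp with h | h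
    · exact Or.inl h
    · rcases Finset.mem_image.1 h with ⟨x, hx, rfl⟩
      exact Or.inr ⟨x, hx, rfl⟩
  have hdisj : (parts : Set (Finset ℕ)).PairwiseDisjoint id := by
    intro p hp q hq hpq
    rcases hmem p hp with rfl | ⟨x, hx, rfl⟩ <;> rcases hmem q hq with rfl | ⟨y, hy, rfl⟩
    · exact absurd rfl hpq
    · simp only [Finset.mem_sdiff] at hy
      simpa [Function.onFun, id_eq, Finset.disjoint_singleton_right] using hy.2
    · simp only [Finset.mem_sdiff] at hx
      simpa [Function.onFun, id_eq, Finset.disjoint_singleton_left] using hx.2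
    · simp only [Function.onFun, id_eq, Finset.disjoint_singleton_left, Finset.mem_singleton]
      intro h; exact hpq (by rw [h])
  have hsup : parts.sup id = Finset.range (n + 1) := by
    apply Finset.Subset.antisymm
    · show parts.sup id ≤ _
      apply Finset.sup_le
      intro p hp
      rcases hmem p hp with rfl | ⟨x, hx, rfl⟩
      · exact hBsub
      · simp only [Finset.mem_sdiff] at hx
        simp [id, Finset.singleton_subset_iff, hx.1]
    · intro x hx
      by_cases hxB : x ∈ B
      · exact Finset.mem_sup.2 ⟨B, Finset.mem_insert_self B _, hxB⟩
      · refine Finset.mem_sup.2 ⟨{x}, ?_, Finset.mem_singleton_self x⟩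
        exact Finset.mem_insert_of_mem (Finset.mem_image_of_mem _ (Finset.mem_sdiff.2 ⟨hx, hxB⟩))
  have hbot : ⊥ ∉ parts := by
    intro h
    rcases hmem _ h with h | ⟨x, _, h⟩
    · have : (0 : ℕ) ∈ B := Finset.mem_insert_self _ _
      rw [← h] at this; simp at this
    · exact absurd h.symm (Finset.singleton_ne_empty x)
  refine ⟨⟨parts, Finset.supIndep_iff_pairwiseDisjoint.2 hdisj, hsup, hbot⟩, ?_⟩
  have hBmem : B ∈ parts := Finset.mem_insert_self _ _
  have hBmin : B.min' ⟨0, Finset.mem_insert_self _ _⟩ = 0 := by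
    apply le_antisymm
    · exact Finset.min'_le _ _ (Finset.mem_insert_self _ _)
    · exact Nat.zero_le _
  ext x
  simp only [H, Finset.mem_sup, Finset.mem_attach, true_and, Subtype.exists]
  constructor
  · rintro ⟨p, hp, hx⟩
    rcases hmem p hp with rfl | ⟨y, hy, rfl⟩
    · rw [show (B.min' _) = 0 from hBmin] at hx
      rcases Finset.mem_erase.1 hx with ⟨hne, hxB⟩
      rcases Finset.mem_insert.1 hxB with h | h
      · exact absurd h hne
      · exact h
    · simp at hx
  · intro hx
    refine ⟨B, hBmem, ?_⟩
    rw [show (B.min' _) = 0 from hBmin]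
    refine Finset.mem_erase.2 ⟨?_, Finset.mem_insert_of_mem hx⟩
    have := hA hx; simp only [Finset.mem_Icc] at this; omega
end

section
/- If a partition 𝒱 of {0,1,...,n} covers a partition 𝒰 in the refinement order (i.e., 𝒱 is obtained from 𝒰 by merging exactly two blocks), then H(𝒱) = H(𝒰) ∪ {m}, where m is the larger of the two minima of the merged blocks; in particular H(𝒱) has exactly one more element than H(𝒰). -/
lemma mem_H {n : ℕ} {P : Finpartition (Finset.range (n + 1))} {x : ℕ} :
    x ∈ H P ↔ ∃ U, ∃ h : U ∈ P.parts, x ∈ U ∧ x ≠ U.min' (P.nonempty_of_mem_parts h) := by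
  simp only [H, Finset.mem_sup, Finset.mem_attach, true_and, Subtype.exists,
    Finset.mem_erase]
  constructor
  · rintro ⟨U, h, hx, hne⟩; exact ⟨U, h, hne, hx⟩
  · rintro ⟨U, h, hx, hne⟩; exact ⟨U, h, hne, hx⟩

theorem stmt_4 (n : ℕ) (P Q : Finpartition (Finset.range (n + 1)))
    (A B : Finset ℕ) (hA : A ∈ P.parts) (hB : B ∈ P.parts) (hAB : A ≠ B)
    (hQ : Q.parts = insert (A ∪ B) (P.parts \ {A, B})) :
    H Q = insert
      (max (A.min' (P.nonempty_of_mem_parts hA)) (B.min' (P.nonempty_of_mem_parts hB))) (H P) ∧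
    (H Q).card = (H P).card + 1 := by
  set a := A.min' (P.nonempty_of_mem_parts hA) with ha
  set b := B.min' (P.nonempty_of_mem_parts hB) with hb
  have haA : a ∈ A := Finset.min'_mem _ _
  have hbB : b ∈ B := Finset.min'_mem _ _
  have hdisj : Disjoint A B := P.disjoint hA hB hAB
  have hab : a ≠ b := fun h => Finset.disjoint_left.1 hdisj haA (h ▸ hbB)
  have hABQ : A ∪ B ∈ Q.parts := by rw [hQ]; exact Finset.mem_insert_self _ _
  have hne : (A ∪ B).Nonempty := Q.nonempty_of_mem_parts hABQ
  have hmin : (A ∪ B).min' hne = min a b := by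
    apply le_antisymm
    · rcases le_total a b with h | h
      · simpa [min_eq_left h] using Finset.min'_le _ a (Finset.mem_union_left _ haA)
      · simpa [min_eq_right h] using Finset.min'_le _ b (Finset.mem_union_right _ hbB)
    · apply Finset.le_min'
      intro y hy
      rcases Finset.mem_union.1 hy with h | h
      · exact le_trans (min_le_left _ _) (Finset.min'_le _ _ h)
      · exact le_trans (min_le_right _ _) (Finset.min'_le _ _ h)
  have hmaxne : max a b ≠ (A ∪ B).min' hne := by
    rw [hmin]; rcases hab.lt_or_gt with h | h
    · simp [max_eq_right h.le, min_eq_left h.le]; omega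
    · simp [max_eq_left h.le, min_eq_right h.le]; omega
  have hmaxmem : max a b ∈ A ∪ B := by
    rcases le_total a b with h | h
    · rw [max_eq_right h]; exact Finset.mem_union_right _ hbB
    · rw [max_eq_left h]; exact Finset.mem_union_left _ haA
  have hmaxHP : max a b ∉ H P := by
    rw [mem_H]; rintro ⟨U, h, hxU, hxne⟩
    rcases le_total a b with hle | hle
    · rw [max_eq_right hle] at hxU hxne
      have hU : U = B := P.eq_of_mem_parts h hB hxU hbB
      subst hU; exact hxne hb
    · rw [max_eq_left hle] at hxU hxne
      have hU : U = A := P.eq_of_mem_parts h hA hxU haA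
      subst hU; exact hxne ha
  have key : H Q = insert (max a b) (H P) := by
    ext x
    rw [Finset.mem_insert, mem_H, mem_H]
    constructor
    · rintro ⟨U, h, hxU, hxne⟩
      rw [hQ, Finset.mem_insert] at h
      rcases h with rfl | h
      · -- U = A ∪ B
        by_cases hx : x = max a b
        · exact Or.inl hx
        · right
          have hxmin : x ≠ min a b := by
            intro hxm; exact hxne (hxm.trans hmin.symm)
          have hxa : x ≠ a := by
            rcases le_total a b with h' | h'
            · rw [min_eq_left h'] at hxmin; exact hxmin
            · rw [max_eq_left h'] at hx; exact hx
          have hxb : x ≠ b := by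
            rcases le_total a b with h' | h'
            · rw [max_eq_right h'] at hx; exact hx
            · rw [min_eq_right h'] at hxmin; exact hxmin
          rcases Finset.mem_union.1 hxU with hxA | hxB
          · exact ⟨A, hA, hxA, hxa⟩
          · exact ⟨B, hB, hxB, hxb⟩
      · rcases Finset.mem_sdiff.1 h with ⟨hP, _⟩
        exact Or.inr ⟨U, hP, hxU, hxne⟩
    · rintro (rfl | ⟨U, h, hxU, hxne⟩)
      · exact ⟨A ∪ B, hABQ, hmaxmem, hmaxne⟩
      · by_cases hU : U = A ∨ U = B
        · refine ⟨A ∪ B, hABQ, ?_, ?_⟩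
          · rcases hU with rfl | rfl
            · exact Finset.mem_union_left _ hxU
            · exact Finset.mem_union_right _ hxU
          · rw [hmin]
            rcases hU with rfl | rfl
            · intro hxm
              rcases le_total a b with h' | h'
              · exact hxne ((hxm.trans (min_eq_left h')).trans ha)
              · exact Finset.disjoint_left.1 hdisj hxU
                  (show x ∈ B by rw [hxm, min_eq_right h']; exact hbB)
            · intro hxm
              rcases le_total a b with h' | h'
              · exact Finset.disjoint_left.1 hdisj
                  (show x ∈ A by rw [hxm, min_eq_left h']; exact haA) hxU
              · exact hxne ((hxm.trans (min_eq_right h')).trans hb)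
        · push_neg at hU
          refine ⟨U, ?_, hxU, hxne⟩
          rw [hQ]
          exact Finset.mem_insert_of_mem (Finset.mem_sdiff.2 ⟨h, by simp [hU.1, hU.2]⟩)
  refine ⟨key, ?_⟩
  rw [key, Finset.card_insert_of_notMem hmaxHP]
end

section
/- The number of maximal chains in the partition lattice of {0,1,...,n} (from the discrete partition to the indiscrete partition) equals (n+1)! · n! / 2^n. -/
open Finset


namespace ChainCount

variable {α : Type*} [DecidableEq α] {s : Finset α}

/-- Merging two parts of a finpartition. -/
def merge (P : Finpartition s) (a b : Finset α) (ha : a ∈ P.parts) (hb : b ∈ P.parts)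
    (hab : a ≠ b) : Finpartition s where
  parts := insert (a ∪ b) ((P.parts.erase a).erase b)
  supIndep := by
    rw [Finset.supIndep_iff_pairwiseDisjoint, coe_insert]
    have hpd : (((P.parts.erase a).erase b : Finset (Finset α)) : Set (Finset α)).PairwiseDisjoint id := by
      apply P.disjoint.subset
      intro x hx
      exact mem_of_mem_erase (mem_of_mem_erase hx)
    refine hpd.insert ?_
    intro d hd _
    have hdp : d ∈ P.parts := mem_of_mem_erase (mem_of_mem_erase hd)
    have hda : d ≠ a := ne_of_mem_erase (mem_of_mem_erase hd)
    have hdb : d ≠ b := ne_of_mem_erase hd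
    have h1 : Disjoint (a : Finset α) d := P.disjoint ha hdp (fun h => hda h.symm)
    have h2 : Disjoint (b : Finset α) d := P.disjoint hb hdp (fun h => hdb h.symm)
    show Disjoint (a ∪ b) d
    rw [disjoint_union_left]
    exact ⟨h1, h2⟩
  sup_parts := by
    have hb' : b ∈ P.parts.erase a := mem_erase.2 ⟨fun h => hab h.symm, hb⟩
    have e1 : insert b ((P.parts.erase a).erase b) = P.parts.erase a := insert_erase hb'
    have e2 : insert a (P.parts.erase a) = P.parts := insert_erase ha
    have := P.sup_parts
    rw [← e2, ← e1] at this
    rw [sup_insert] at this ⊢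
    rw [sup_insert] at this
    simp only [id] at this ⊢
    rw [← sup_assoc] at this
    exact this
  bot_notMem := by
    intro h
    rcases mem_insert.1 h with h | h
    · have := P.nonempty_of_mem_parts ha
      rw [bot_eq_empty] at h
      rcases this with ⟨x, hx⟩
      have : x ∈ a ∪ b := mem_union_left _ hx
      rw [← h] at this
      exact notMem_empty x this
    · exact P.bot_notMem (mem_of_mem_erase (mem_of_mem_erase h))

theorem merge_parts (P : Finpartition s) (a b : Finset α) (ha : a ∈ P.parts) (hb : b ∈ P.parts)
    (hab : a ≠ b) :
    (merge P a b ha hb hab).parts = insert (a ∪ b) ((P.parts.erase a).erase b) := rfl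

theorem union_not_mem (P : Finpartition s) {a b : Finset α} (ha : a ∈ P.parts) (hb : b ∈ P.parts)
    (hab : a ≠ b) : a ∪ b ∉ P.parts := by
  intro h
  obtain ⟨x, hx⟩ := P.nonempty_of_mem_parts ha
  have : a ∪ b = a := P.eq_of_mem_parts h ha (mem_union_left _ hx) hx
  obtain ⟨y, hy⟩ := P.nonempty_of_mem_parts hb
  have hyb : y ∈ a := this ▸ mem_union_right _ hy
  exact (P.disjoint ha hb hab).forall_ne_finset hyb hy rfl



theorem union_not_mem_erase (P : Finpartition s) {a b : Finset α} (ha : a ∈ P.parts)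
    (hb : b ∈ P.parts) (hab : a ≠ b) : a ∪ b ∉ (P.parts.erase a).erase b := fun h =>
  union_not_mem P ha hb hab (mem_of_mem_erase (mem_of_mem_erase h))

theorem merge_card (P : Finpartition s) (a b : Finset α) (ha : a ∈ P.parts) (hb : b ∈ P.parts)
    (hab : a ≠ b) : (merge P a b ha hb hab).parts.card + 1 = P.parts.card := by
  rw [merge_parts, card_insert_of_notMem (union_not_mem_erase P ha hb hab)]
  have hb' : b ∈ P.parts.erase a := mem_erase.2 ⟨fun h => hab h.symm, hb⟩
  rw [card_erase_of_mem hb', card_erase_of_mem ha]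
  have h2 : 2 ≤ P.parts.card := by
    have := one_lt_card.2 ⟨a, ha, b, hb, hab⟩
    omega
  omega

theorem a_not_mem_merge (P : Finpartition s) (a b : Finset α) (ha : a ∈ P.parts)
    (hb : b ∈ P.parts) (hab : a ≠ b) : a ∉ (merge P a b ha hb hab).parts := by
  rw [merge_parts, mem_insert]
  rintro (h | h)
  · obtain ⟨y, hy⟩ := P.nonempty_of_mem_parts hb
    have : y ∈ a := h ▸ mem_union_right _ hy
    exact (P.disjoint ha hb hab).forall_ne_finset this hy rfl
  · exact (ne_of_mem_erase (mem_of_mem_erase h)) rfl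

theorem le_merge (P : Finpartition s) (a b : Finset α) (ha : a ∈ P.parts) (hb : b ∈ P.parts)
    (hab : a ≠ b) : P ≤ merge P a b ha hb hab := by
  intro c hc
  by_cases hca : c = a
  · exact ⟨a ∪ b, mem_insert_self _ _, hca ▸ subset_union_left⟩
  by_cases hcb : c = b
  · exact ⟨a ∪ b, mem_insert_self _ _, hcb ▸ subset_union_right⟩
  · exact ⟨c, mem_insert_of_mem (mem_erase.2 ⟨hcb, mem_erase.2 ⟨hca, hc⟩⟩), le_rfl⟩

theorem lt_merge (P : Finpartition s) (a b : Finset α) (ha : a ∈ P.parts) (hb : b ∈ P.parts)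
    (hab : a ≠ b) : P < merge P a b ha hb hab := by
  refine lt_of_le_of_ne (le_merge P a b ha hb hab) ?_
  intro h
  exact a_not_mem_merge P a b ha hb hab (h ▸ ha)

/-- key structural lemma: a strict refinement admits a merge below it. -/
theorem exists_merge_le {P Q : Finpartition s} (h : P < Q) :
    ∃ (a b : Finset α) (ha : a ∈ P.parts) (hb : b ∈ P.parts) (hab : a ≠ b),
      merge P a b ha hb hab ≤ Q := by
  have hle := h.le
  -- find a part of Q not in P
  have hne : ∃ c ∈ Q.parts, c ∉ P.parts := by
    by_contra hc
    push_neg at hc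
    have hQP : Q ≤ P := fun d hd => ⟨d, hc d hd, le_rfl⟩
    exact h.ne (le_antisymm hle hQP)
  obtain ⟨c, hc, hcP⟩ := hne
  obtain ⟨a, ha, hac⟩ := Finpartition.exists_le_of_le hle hc
  have hssub : a ⊂ c := ssubset_of_subset_of_ne hac (fun h' => hcP (h' ▸ ha))
  obtain ⟨x, hxc, hxa⟩ := exists_of_ssubset hssub
  have hxs : x ∈ s := (Q.le hc) hxc
  obtain ⟨b, hbP, hxb⟩ := P.exists_mem hxs
  have hab : a ≠ b := fun h' => hxa (h' ▸ hxb)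
  refine ⟨a, b, ha, hbP, hab, ?_⟩
  -- b ≤ c
  obtain ⟨c', hc', hbc'⟩ := hle hbP
  have : c' = c := Q.eq_of_mem_parts hc' hc (hbc' hxb) hxc
  subst this
  intro d hd
  rcases mem_insert.1 hd with rfl | hd
  · exact ⟨c', hc', union_subset hac hbc'⟩
  · exact hle (mem_of_mem_erase (mem_of_mem_erase hd))

theorem card_lt_of_lt {P Q : Finpartition s} (h : P < Q) : Q.parts.card < P.parts.card := by
  obtain ⟨a, b, ha, hb, hab, hle⟩ := exists_merge_le h
  have h1 := Finpartition.card_mono hle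
  have h2 := merge_card P a b ha hb hab
  omega

theorem eq_of_le_of_card_le {P Q : Finpartition s} (h : P ≤ Q)
    (hc : P.parts.card ≤ Q.parts.card) : P = Q := by
  by_contra hne
  exact absurd hc (not_le.2 (card_lt_of_lt (lt_of_le_of_ne h hne)))

theorem merge_covBy (P : Finpartition s) (a b : Finset α) (ha : a ∈ P.parts) (hb : b ∈ P.parts)
    (hab : a ≠ b) : P ⋖ merge P a b ha hb hab := by
  refine ⟨lt_merge P a b ha hb hab, ?_⟩
  intro R hPR hRm
  obtain ⟨a', b', ha', hb', hab', hle⟩ := exists_merge_le hPR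
  have h1 : R.parts.card + 1 ≤ P.parts.card := by
    have := Finpartition.card_mono hle
    have := merge_card P a' b' ha' hb' hab'
    omega
  have h2 := merge_card P a b ha hb hab
  exact absurd (eq_of_le_of_card_le hRm.le (by omega)) hRm.ne

theorem covBy_iff_merge {P Q : Finpartition s} :
    P ⋖ Q ↔ ∃ (a b : Finset α) (ha : a ∈ P.parts) (hb : b ∈ P.parts) (hab : a ≠ b),
      merge P a b ha hb hab = Q := by
  constructor
  · intro h
    obtain ⟨a, b, ha, hb, hab, hle⟩ := exists_merge_le h.1
    refine ⟨a, b, ha, hb, hab, ?_⟩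
    by_contra hne
    exact h.2 (lt_merge P a b ha hb hab) (lt_of_le_of_ne hle hne)
  · rintro ⟨a, b, ha, hb, hab, rfl⟩
    exact merge_covBy P a b ha hb hab

theorem covBy_card {P Q : Finpartition s} (h : P ⋖ Q) : Q.parts.card + 1 = P.parts.card := by
  obtain ⟨a, b, ha, hb, hab, rfl⟩ := covBy_iff_merge.1 h
  exact merge_card P a b ha hb hab


theorem merge_comm (P : Finpartition s) (a b : Finset α) (ha : a ∈ P.parts) (hb : b ∈ P.parts)
    (hab : a ≠ b) : merge P a b ha hb hab = merge P b a hb ha hab.symm := by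
  apply Finpartition.ext
  rw [merge_parts, merge_parts, union_comm, Finset.erase_right_comm]

theorem sdiff_merge (P : Finpartition s) (a b : Finset α) (ha : a ∈ P.parts) (hb : b ∈ P.parts)
    (hab : a ≠ b) : P.parts \ (merge P a b ha hb hab).parts = {a, b} := by
  ext d
  simp only [mem_sdiff, mem_insert, mem_singleton]
  constructor
  · rintro ⟨hd, hdm⟩
    by_contra hcon
    push_neg at hcon
    exact hdm (mem_insert_of_mem (mem_erase.2 ⟨hcon.2, mem_erase.2 ⟨hcon.1, hd⟩⟩))
  · rintro (rfl | rfl)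
    · exact ⟨ha, a_not_mem_merge P d b ha hb hab⟩
    · refine ⟨hb, ?_⟩
      rw [merge_comm]
      exact a_not_mem_merge P d a hb ha hab.symm

theorem card_covers (P : Finpartition s) :
    Nat.card {Q : Finpartition s // P ⋖ Q} = P.parts.card.choose 2 := by
  classical
  rw [Nat.card_eq_fintype_card, Fintype.card_subtype, ← Finset.card_powersetCard 2 P.parts]
  apply Finset.card_bij (fun Q _ => P.parts \ Q.parts)
  · intro Q hQ
    rw [mem_filter] at hQ
    obtain ⟨a, b, ha, hb, hab, rfl⟩ := covBy_iff_merge.1 hQ.2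
    rw [sdiff_merge, mem_powersetCard]
    refine ⟨insert_subset ha (singleton_subset_iff.2 hb), ?_⟩
    rw [card_insert_of_notMem (by simpa using hab), card_singleton]
  · intro Q₁ hQ₁ Q₂ hQ₂ heq
    rw [mem_filter] at hQ₁ hQ₂
    obtain ⟨a, b, ha, hb, hab, rfl⟩ := covBy_iff_merge.1 hQ₁.2
    obtain ⟨a', b', ha', hb', hab', rfl⟩ := covBy_iff_merge.1 hQ₂.2
    rw [sdiff_merge, sdiff_merge] at heq
    have h1 : a = a' ∧ b = b' ∨ a = b' ∧ b = a' := by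
      have hmema : a ∈ ({a', b'} : Finset (Finset α)) := heq ▸ mem_insert_self _ _
      have hmemb : b ∈ ({a', b'} : Finset (Finset α)) :=
        heq ▸ mem_insert_of_mem (mem_singleton_self _)
      simp only [mem_insert, mem_singleton] at hmema hmemb
      rcases hmema with rfl | rfl <;> rcases hmemb with rfl | rfl <;> tauto
    rcases h1 with ⟨rfl, rfl⟩ | ⟨rfl, rfl⟩
    · rfl
    · exact merge_comm P a b ha hb hab
  · intro t ht
    rw [mem_powersetCard] at ht
    obtain ⟨a, b, hab, rfl⟩ := Finset.card_eq_two.1 ht.2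
    have ha : a ∈ P.parts := ht.1 (mem_insert_self _ _)
    have hb : b ∈ P.parts := ht.1 (mem_insert_of_mem (mem_singleton_self _))
    refine ⟨merge P a b ha hb hab, ?_, ?_⟩
    · rw [mem_filter]
      exact ⟨mem_univ _, merge_covBy P a b ha hb hab⟩
    · rw [sdiff_merge]


theorem chain_parts_card {k : ℕ} {c : Fin (k + 1) → Finpartition s} (h0 : c 0 = ⊥)
    (hc : ∀ i : Fin k, c i.castSucc ⋖ c i.succ) (i : Fin (k + 1)) :
    (c i).parts.card + i.val = s.card := by
  obtain ⟨j, hj⟩ := i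
  induction j with
  | zero =>
    have : (⟨0, hj⟩ : Fin (k + 1)) = 0 := rfl
    rw [this, h0]
    simp [Finpartition.card_bot]
  | succ m ih =>
    have hm : m < k + 1 := by omega
    have hmk : m < k := by omega
    have h3 : (c ⟨m + 1, hj⟩).parts.card + 1 = (c ⟨m, hm⟩).parts.card :=
      covBy_card (hc ⟨m, hmk⟩)
    have h4 : (c ⟨m, hm⟩).parts.card + m = s.card := ih hm
    show (c ⟨m + 1, hj⟩).parts.card + (m + 1) = s.card
    omega

/-- The equivalence splitting off the last step of a chain. -/
def chainEquiv (k : ℕ) :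
    {c : Fin (k + 2) → Finpartition s //
        c 0 = ⊥ ∧ ∀ i : Fin (k + 1), c i.castSucc ⋖ c i.succ} ≃
      Σ c : {c : Fin (k + 1) → Finpartition s //
          c 0 = ⊥ ∧ ∀ i : Fin k, c i.castSucc ⋖ c i.succ},
        {Q : Finpartition s // c.1 (Fin.last k) ⋖ Q} where
  toFun c :=
    ⟨⟨Fin.init c.1, by
        rw [Fin.init]
        rw [Fin.castSucc_zero]
        exact c.2.1, fun i => by
        have := c.2.2 i.castSucc
        rwa [Fin.succ_castSucc] at this⟩,
      ⟨c.1 (Fin.last (k + 1)), by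
        have := c.2.2 (Fin.last k)
        rwa [Fin.succ_last] at this⟩⟩
  invFun p :=
    ⟨Fin.snoc p.1.1 p.2.1, by
      show Fin.snoc (α := fun _ => Finpartition s) p.1.1 p.2.1 (Fin.castSucc (0 : Fin (k + 1))) = ⊥
      rw [Fin.snoc_castSucc]
      exact p.1.2.1, fun i => by
      refine Fin.lastCases ?_ ?_ i
      · rw [Fin.succ_last, Fin.snoc_last, Fin.snoc_castSucc]
        exact p.2.2
      · intro j
        rw [Fin.succ_castSucc, Fin.snoc_castSucc, Fin.snoc_castSucc]
        exact p.1.2.2 j⟩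
  left_inv c := Subtype.ext (Fin.snoc_init_self c.1)
  right_inv p := by
    obtain ⟨⟨f, h0, hc⟩, ⟨Q, hQ⟩⟩ := p
    dsimp only
    apply Sigma.ext
    · apply Subtype.ext
      exact Fin.init_snoc (α := fun _ => Finpartition s) Q f
    · have hiff : ∀ x : Finpartition s,
          (Fin.init (α := fun _ => Finpartition s) (Fin.snoc f Q) (Fin.last k) ⋖ x) ↔
            (f (Fin.last k) ⋖ x) := by
        intro x
        rw [Fin.init_snoc (α := fun _ => Finpartition s) Q f]
      exact (Subtype.heq_iff_coe_eq hiff).2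
        (Fin.snoc_last (α := fun _ => Finpartition s) Q f)

theorem card_chains (k : ℕ) :
    Nat.card {c : Fin (k + 1) → Finpartition s //
        c 0 = ⊥ ∧ ∀ i : Fin k, c i.castSucc ⋖ c i.succ} =
      ∏ j ∈ Finset.range k, (s.card - j).choose 2 := by
  classical
  induction k with
  | zero =>
    rw [Finset.prod_range_zero]
    rw [Nat.card_eq_one_iff_unique]
    refine ⟨⟨fun a b => ?_⟩, ⟨⟨fun _ => ⊥, rfl, fun i => i.elim0⟩⟩⟩
    obtain ⟨c, hc0, -⟩ := a
    obtain ⟨d, hd0, -⟩ := b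
    apply Subtype.ext
    funext i
    have hi : i = 0 := Fin.ext (by omega)
    subst hi
    exact hc0.trans hd0.symm
  | succ m ih =>
    rw [Nat.card_congr (chainEquiv m), Finset.prod_range_succ, ← ih]
    rw [Nat.card_eq_fintype_card, Fintype.card_sigma]
    have hconst : ∀ c : {c : Fin (m + 1) → Finpartition s //
        c 0 = ⊥ ∧ ∀ i : Fin m, c i.castSucc ⋖ c i.succ},
        Fintype.card {Q : Finpartition s // c.1 (Fin.last m) ⋖ Q} = (s.card - m).choose 2 := by
      intro c
      have hcard := chain_parts_card c.2.1 c.2.2 (Fin.last m)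
      rw [Fin.val_last] at hcard
      rw [← Nat.card_eq_fintype_card, card_covers]
      have he : (c.1 (Fin.last m)).parts.card = s.card - m :=
        Nat.eq_sub_of_add_eq hcard
      rw [he]
    simp only [hconst]
    rw [Finset.sum_const, smul_eq_mul, Nat.card_eq_fintype_card, Finset.card_univ]


theorem eq_top_of_parts_card_eq_one {P : Finpartition s} (hs : s.Nonempty)
    (h : P.parts.card = 1) : P = ⊤ := by
  have h1 : (⊤ : Finpartition s).parts.Nonempty := by
    obtain ⟨x, hx⟩ := hs
    obtain ⟨t, ht, -⟩ := (⊤ : Finpartition s).exists_mem hx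
    exact ⟨t, ht⟩
  exact eq_of_le_of_card_le le_top (by rw [h]; exact card_pos.2 h1)

theorem two_mul_choose_two (m : ℕ) : 2 * (m + 2).choose 2 = (m + 2) * (m + 1) := by
  rw [Nat.choose_two_right]
  have h2 : (m + 2) * (m + 2 - 1) = (m + 2) * (m + 1) := by
    congr 1
  rw [h2]
  refine Nat.mul_div_cancel' ?_
  rcases Nat.even_or_odd m with he | ho
  · obtain ⟨t, rfl⟩ := he
    exact ⟨(t + 1) * (2 * t + 1), by ring⟩
  · obtain ⟨t, rfl⟩ := ho
    exact ⟨(2 * t + 3) * (t + 1), by ring⟩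

theorem aux_prod (n : ℕ) :
    2 ^ n * ∏ j ∈ Finset.range n, (n + 1 - j).choose 2 =
      (n + 1).factorial * n.factorial := by
  induction n with
  | zero => simp
  | succ m ih =>
    rw [Finset.prod_range_succ']
    have hf : ∀ j, (m + 1 + 1 - (j + 1)).choose 2 = (m + 1 - j).choose 2 := by
      intro j; congr 1; omega
    rw [Finset.prod_congr rfl fun j _ => hf j]
    have : m + 1 + 1 - 0 = m + 2 := rfl
    rw [this]
    rw [pow_succ]
    calc 2 ^ m * 2 * ((∏ j ∈ Finset.range m, (m + 1 - j).choose 2) * (m + 2).choose 2)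
        = (2 ^ m * ∏ j ∈ Finset.range m, (m + 1 - j).choose 2) *
            (2 * (m + 2).choose 2) := by ring
      _ = ((m + 1).factorial * m.factorial) * ((m + 2) * (m + 1)) := by
            rw [ih, two_mul_choose_two]
      _ = (m + 1 + 1).factorial * (m + 1).factorial := by
            rw [Nat.factorial_succ (m + 1), Nat.factorial_succ m]
            ring

end ChainCount

theorem stmt_14 (n : ℕ) :
    Nat.card {c : Fin (n + 1) → Finpartition (Finset.range (n + 1)) //
        c 0 = ⊥ ∧ c (Fin.last n) = ⊤ ∧ ∀ i : Fin n, c i.castSucc ⋖ c i.succ} =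
      (n + 1).factorial * n.factorial / 2 ^ n := by
  have hcardrange : (Finset.range (n + 1)).card = n + 1 := Finset.card_range (n + 1)
  have hiff : ∀ c : Fin (n + 1) → Finpartition (Finset.range (n + 1)),
      (c 0 = ⊥ ∧ c (Fin.last n) = ⊤ ∧ ∀ i : Fin n, c i.castSucc ⋖ c i.succ) ↔
      (c 0 = ⊥ ∧ ∀ i : Fin n, c i.castSucc ⋖ c i.succ) := by
    intro c
    constructor
    · rintro ⟨h0, -, hc⟩
      exact ⟨h0, hc⟩
    · rintro ⟨h0, hc⟩
      refine ⟨h0, ?_, hc⟩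
      have := ChainCount.chain_parts_card h0 hc (Fin.last n)
      rw [Fin.val_last, hcardrange] at this
      exact ChainCount.eq_top_of_parts_card_eq_one (Finset.nonempty_range_iff.2 (by omega))
        (by omega)
  rw [Nat.card_congr (Equiv.subtypeEquivRight hiff), ChainCount.card_chains, hcardrange,
    ← ChainCount.aux_prod n, Nat.mul_div_cancel_left _ (pow_pos (by norm_num) n)]
end

section
/- If 𝒰 ≤ 𝒱 strictly in the partition lattice of {0,1,...,n}, then H(𝒰) is a strict subset of H(𝒱); i.e., H is strictly monotone. -/
lemma mem_H_iff {n : ℕ} {P : Finpartition (Finset.range (n + 1))} {x : ℕ} :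
    x ∈ H P ↔ ∃ U : Finset ℕ, ∃ hU : U ∈ P.parts, x ∈ U ∧ x ≠ U.min' (P.nonempty_of_mem_parts hU) := by
  simp only [H, Finset.mem_sup, Finset.mem_attach, Finset.mem_erase]
  constructor
  · rintro ⟨⟨U, hU⟩, -, hne, hx⟩
    exact ⟨U, hU, hx, hne⟩
  · rintro ⟨U, hU, hx, hne⟩
    exact ⟨⟨U, hU⟩, trivial, hne, hx⟩

lemma min_not_mem_H {n : ℕ} {P : Finpartition (Finset.range (n + 1))} {U : Finset ℕ}
    (hU : U ∈ P.parts) : U.min' (P.nonempty_of_mem_parts hU) ∉ H P := by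
  intro h
  rw [mem_H_iff] at h
  obtain ⟨V, hV, hx, hne⟩ := h
  have hVU : V = U := P.eq_of_mem_parts hV hU hx (U.min'_mem _)
  subst hVU
  exact hne rfl

lemma H_mono {n : ℕ} {P Q : Finpartition (Finset.range (n + 1))} (h : P ≤ Q) : H P ⊆ H Q := by
  intro x hx
  rw [mem_H_iff] at hx ⊢
  obtain ⟨U, hU, hxU, hne⟩ := hx
  obtain ⟨V, hV, hUV⟩ := h hU
  refine ⟨V, hV, hUV hxU, fun hxm => hne ?_⟩
  have h1 : V.min' (Q.nonempty_of_mem_parts hV) ≤ U.min' (P.nonempty_of_mem_parts hU) :=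
    V.min'_le _ (hUV (U.min'_mem _))
  have h2 : U.min' (P.nonempty_of_mem_parts hU) ≤ x := U.min'_le _ hxU
  omega

theorem stmt_16 (n : ℕ) : StrictMono (H (n := n)) := by
  intro P Q hPQ
  rw [Finset.lt_iff_ssubset, Finset.ssubset_iff_of_subset (H_mono hPQ.le)]
  -- find V ∈ Q.parts and U ∈ P.parts with U ⊂ V
  have key : ∃ V ∈ Q.parts, ∃ U ∈ P.parts, U ⊂ V := by
    by_contra hcon
    push_neg at hcon
    apply hPQ.ne
    ext U
    constructor
    · intro hU
      obtain ⟨V, hV, hUV⟩ := hPQ.le hU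
      rcases hUV.eq_or_ssubset with rfl | hss
      · exact hV
      · exact absurd hss (hcon V hV U hU)
    · intro hU
      obtain ⟨y, hy⟩ := Q.nonempty_of_mem_parts hU
      obtain ⟨W, hW, hyW⟩ := P.exists_mem (Q.le hU hy)
      obtain ⟨V, hV, hWV⟩ := hPQ.le hW
      have hVU : V = U := Q.eq_of_mem_parts hV hU (hWV hyW) hy
      subst hVU
      rcases hWV.eq_or_ssubset with rfl | hss
      · exact hW
      · exact absurd hss (hcon V hV W hW)
  obtain ⟨V, hV, U, hU, hUV⟩ := key
  obtain ⟨y, hyV, hyU⟩ := Finset.exists_of_ssubset hUV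
  obtain ⟨W, hW, hyW⟩ := P.exists_mem (Q.le hV hyV)
  -- W ⊆ V
  have hWV : W ⊆ V := by
    obtain ⟨V', hV', hWV'⟩ := hPQ.le hW
    have : V' = V := Q.eq_of_mem_parts hV' hV (hWV' hyW) hyV
    subst this; exact hWV'
  have hUWne : U ≠ W := fun h => hyU (h ▸ hyW)
  -- minima of U and W are distinct
  have hdisj : Disjoint U W := P.disjoint hU hW hUWne
  have hmne : U.min' (P.nonempty_of_mem_parts hU) ≠ W.min' (P.nonempty_of_mem_parts hW) := by
    intro h
    exact Finset.disjoint_left.1 hdisj (U.min'_mem _) (h ▸ W.min'_mem _)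
  set mV := V.min' (Q.nonempty_of_mem_parts hV) with hmV
  by_cases hc : U.min' (P.nonempty_of_mem_parts hU) = mV
  · refine ⟨W.min' (P.nonempty_of_mem_parts hW), ?_, min_not_mem_H hW⟩
    rw [mem_H_iff]
    exact ⟨V, hV, hWV (W.min'_mem _), fun h => hmne (hc.trans h.symm)⟩
  · refine ⟨U.min' (P.nonempty_of_mem_parts hU), ?_, min_not_mem_H hU⟩
    rw [mem_H_iff]
    exact ⟨V, hV, hUV.subset (U.min'_mem _), hc⟩
end

section
/- The number of saturated chains of length n in the partition lattice of {0,1,...,n} starting at the discrete partition that map under H to a given fixed maximal chain ∅ = A_0 ⊂ A_1 ⊂ ... ⊂ A_n in the subset lattice of {1,...,n} equals the product over k = 1,...,n of the number of blocks of the partition at step k−1 whose minimum is strictly less than the element added at step k. -/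
open Finset

/-- Minimum of a finset of naturals (0 if empty). -/
def chMin (U : Finset ℕ) : ℕ := if h : U.Nonempty then U.min' h else 0

lemma chMin_mem {U : Finset ℕ} (h : U.Nonempty) : chMin U ∈ U := by
  rw [chMin, dif_pos h]; exact U.min'_mem h

lemma chMin_le {U : Finset ℕ} {x : ℕ} (h : x ∈ U) : chMin U ≤ x := by
  rw [chMin, dif_pos ⟨x, h⟩]; exact U.min'_le x h

lemma chMin_union {U V : Finset ℕ} (hU : U.Nonempty) (hV : V.Nonempty) :
    chMin (U ∪ V) = min (chMin U) (chMin V) := by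
  apply le_antisymm
  · exact le_min (chMin_le (mem_union_left _ (chMin_mem hU)))
      (chMin_le (mem_union_right _ (chMin_mem hV)))
  · rcases mem_union.1 (chMin_mem (hU.mono subset_union_left : (U ∪ V).Nonempty)) with h | h
    · exact le_trans (min_le_left _ _) (chMin_le h)
    · exact le_trans (min_le_right _ _) (chMin_le h)

variable {s : Finset ℕ}

/-- The set of minima of the parts of a partition. -/
def chMins (P : Finpartition s) : Finset ℕ := P.parts.image chMin

lemma chMin_mem_of_parts {P : Finpartition s} {U : Finset ℕ} (hU : U ∈ P.parts) :
    chMin U ∈ U := chMin_mem (P.nonempty_of_mem_parts hU)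

lemma chMin_injOn (P : Finpartition s) : Set.InjOn chMin P.parts := by
  intro U hU V hV h
  exact P.eq_of_mem_parts hU hV (chMin_mem_of_parts hU) (h ▸ chMin_mem_of_parts hV)

lemma chMins_card (P : Finpartition s) : (chMins P).card = P.parts.card :=
  card_image_of_injOn (chMin_injOn P)

lemma chMins_subset (P : Finpartition s) : chMins P ⊆ s := by
  intro x hx
  obtain ⟨U, hU, rfl⟩ := mem_image.1 hx
  exact P.le hU (chMin_mem_of_parts hU)

lemma mem_chMins_iff {P : Finpartition s} {x : ℕ} (hx : x ∈ s) :
    x ∈ chMins P ↔ chMin (P.part x) = x := by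
  constructor
  · rintro hm
    obtain ⟨U, hU, h⟩ := mem_image.1 hm
    rw [P.part_eq_of_mem hU (h ▸ chMin_mem_of_parts hU), h]
  · intro h
    exact mem_image.2 ⟨P.part x, P.part_mem.2 hx, h⟩

lemma H_eq {n : ℕ} (P : Finpartition (Finset.range (n + 1))) :
    H P = Finset.range (n + 1) \ chMins P := by
  ext x
  simp only [H, Finset.mem_sup, mem_attach, true_and, Subtype.exists, mem_sdiff]
  constructor
  · rintro ⟨U, hU, hx⟩
    rw [mem_erase] at hx
    have hUs : U ⊆ Finset.range (n + 1) := P.le hU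
    have hmin : (U.min' (P.nonempty_of_mem_parts hU)) = chMin U := by
      rw [chMin, dif_pos]
    refine ⟨hUs hx.2, fun hm => ?_⟩
    obtain ⟨V, hV, h⟩ := mem_image.1 hm
    have : V = U := P.eq_of_mem_parts hV hU (h ▸ chMin_mem_of_parts hV) hx.2
    exact hx.1 (by rw [← h, this, hmin])
  · rintro ⟨hxs, hm⟩
    obtain ⟨U, hU, hxU⟩ := P.exists_mem hxs
    refine ⟨U, hU, mem_erase.2 ⟨?_, hxU⟩⟩
    intro h
    exact hm (mem_image.2 ⟨U, hU, by rw [chMin, dif_pos]; exact h.symm⟩)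

lemma chMins_eq {n : ℕ} (P : Finpartition (Finset.range (n + 1))) :
    chMins P = Finset.range (n + 1) \ H P := by
  rw [H_eq, sdiff_sdiff_right_self, inf_eq_inter, inter_eq_right.2 (chMins_subset P)]

lemma H_card {n : ℕ} (P : Finpartition (Finset.range (n + 1))) :
    (H P).card + P.parts.card = n + 1 := by
  have h1 : (H P).card = (n + 1) - P.parts.card := by
    rw [H_eq, card_sdiff_of_subset (chMins_subset P), chMins_card, Finset.card_range]
  have h2 : P.parts.card ≤ n + 1 := by
    simpa using (chMins_card P ▸ card_le_card (chMins_subset P) : _ ≤ (Finset.range (n+1)).card)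
  omega

lemma H_bot (n : ℕ) : H (⊥ : Finpartition (Finset.range (n + 1))) = ∅ := by
  rw [H_eq, sdiff_eq_empty_iff_subset]
  intro x hx
  refine mem_image.2 ⟨{x}, ?_, ?_⟩
  · rw [Finpartition.parts_bot, mem_map]; exact ⟨x, hx, rfl⟩
  · simp [chMin]

lemma filter_card (P : Finpartition s) (x : ℕ) :
    (P.parts.filter fun U => ∃ m ∈ U, m < x).card = ((chMins P).filter (· < x)).card := by
  have h1 : (P.parts.filter fun U => ∃ m ∈ U, m < x) = P.parts.filter fun U => chMin U < x := by
    apply filter_congr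
    intro U hU
    constructor
    · rintro ⟨m, hm, hmx⟩; exact lt_of_le_of_lt (chMin_le hm) hmx
    · intro h; exact ⟨chMin U, chMin_mem_of_parts hU, h⟩
  rw [h1]
  have h2 : (P.parts.filter fun U => chMin U < x).image chMin = (chMins P).filter (· < x) := by
    ext m
    simp only [mem_image, mem_filter, chMins]
    constructor
    · rintro ⟨U, ⟨hU, hlt⟩, rfl⟩
      exact ⟨⟨U, hU, rfl⟩, hlt⟩
    · rintro ⟨⟨U, hU, rfl⟩, hmx⟩
      exact ⟨U, ⟨hU, hmx⟩, rfl⟩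
  rw [← h2, card_image_of_injOn ((chMin_injOn P).mono ?_)]
  intro U hU
  exact (mem_filter.1 hU).1
section Part2
variable {s : Finset ℕ}

lemma subset_part_chMin {P Q : Finpartition s} (h : P ≤ Q) {U : Finset ℕ} (hU : U ∈ P.parts) :
    Q.part (chMin U) ∈ Q.parts ∧ U ⊆ Q.part (chMin U) := by
  obtain ⟨q, hq, hUq⟩ := h hU
  have hx : chMin U ∈ q := hUq (chMin_mem_of_parts hU)
  have : Q.part (chMin U) = q := Q.part_eq_of_mem hq hx
  rw [this]
  exact ⟨hq, hUq⟩

lemma part_chMin_surj {P Q : Finpartition s} (h : P ≤ Q) {q : Finset ℕ} (hq : q ∈ Q.parts) :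
    ∃ U ∈ P.parts, Q.part (chMin U) = q := by
  obtain ⟨y, hy⟩ := Q.nonempty_of_mem_parts hq
  have hys : y ∈ s := Q.le hq hy
  obtain ⟨U, hU, hyU⟩ := P.exists_mem hys
  refine ⟨U, hU, ?_⟩
  have h2 := subset_part_chMin h hU
  exact Q.eq_of_mem_parts h2.1 hq (h2.2 hyU) hy

lemma card_le_of_le {P Q : Finpartition s} (h : P ≤ Q) : Q.parts.card ≤ P.parts.card := by
  apply card_le_card_of_surjOn (fun U => Q.part (chMin U))
  intro q hq
  obtain ⟨U, hU, hUq⟩ := part_chMin_surj h hq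
  exact ⟨U, hU, hUq⟩

lemma eq_of_le_of_card_le {P Q : Finpartition s} (h : P ≤ Q)
    (hc : P.parts.card ≤ Q.parts.card) : P = Q := by
  classical
  have hmaps : ∀ U ∈ P.parts, Q.part (chMin U) ∈ Q.parts := fun U hU => (subset_part_chMin h hU).1
  have hsum : P.parts.card = ∑ q ∈ Q.parts, ((P.parts.filter fun U => Q.part (chMin U) = q).card) :=
    card_eq_sum_card_fiberwise hmaps
  have hone : ∀ q ∈ Q.parts, 1 ≤ (P.parts.filter fun U => Q.part (chMin U) = q).card := by
    intro q hq
    obtain ⟨U, hU, hUq⟩ := part_chMin_surj h hq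
    exact card_pos.2 ⟨U, mem_filter.2 ⟨hU, hUq⟩⟩
  have heq : ∀ q ∈ Q.parts, 1 = (P.parts.filter fun U => Q.part (chMin U) = q).card := by
    rw [← Finset.sum_eq_sum_iff_of_le hone]
    have h5 : ∑ _q ∈ Q.parts, 1 = Q.parts.card := by simp
    have h6 : ∑ q ∈ Q.parts, ((P.parts.filter fun U => Q.part (chMin U) = q).card) ≤ Q.parts.card := by omega
    have h7 := Finset.sum_le_sum hone
    omega
  -- each Q-part equals a single P-part
  refine le_antisymm h ?_
  intro q hq
  obtain ⟨U, hUfil⟩ := card_eq_one.1 (heq q hq).symm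
  have hUmem : U ∈ P.parts ∧ Q.part (chMin U) = q := by
    have h1 : U ∈ P.parts.filter fun U => Q.part (chMin U) = q := by rw [hUfil]; exact mem_singleton_self U
    exact mem_filter.1 h1
  refine ⟨U, hUmem.1, ?_⟩
  -- q ⊆ U
  intro y hy
  have hys : y ∈ s := Q.le hq hy
  obtain ⟨V, hV, hyV⟩ := P.exists_mem hys
  have hVq : Q.part (chMin V) = q := by
    have h2 := subset_part_chMin h hV
    exact Q.eq_of_mem_parts h2.1 hq (h2.2 hyV) hy
  have : V ∈ P.parts.filter fun U => Q.part (chMin U) = q := mem_filter.2 ⟨hV, hVq⟩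
  rw [hUfil, mem_singleton] at this
  exact this ▸ hyV

/-- Merge two parts of a partition. -/
def chMerge (P : Finpartition s) (U V : Finset ℕ) (hU : U ∈ P.parts) (hV : V ∈ P.parts)
    (hUV : U ≠ V) : Finpartition s where
  parts := insert (U ∪ V) ((P.parts.erase U).erase V)
  supIndep := by
    rw [Finset.supIndep_iff_pairwiseDisjoint, coe_insert]
    have hrest : (((P.parts.erase U).erase V : Finset (Finset ℕ)) : Set (Finset ℕ)).PairwiseDisjoint id :=
      P.disjoint.subset (by intro W hW; exact mem_coe.2 (mem_of_mem_erase (mem_of_mem_erase hW)))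
    refine hrest.insert ?_
    intro W hW hne
    have hW' : W ∈ P.parts := mem_of_mem_erase (mem_of_mem_erase hW)
    have hWU : W ≠ U := ne_of_mem_erase (mem_of_mem_erase hW)
    have hWV : W ≠ V := ne_of_mem_erase hW
    simp only [id]
    rw [Finset.disjoint_union_left]
    exact ⟨(P.disjoint (mem_coe.2 hU) hW' (fun h => hWU h.symm)), (P.disjoint (mem_coe.2 hV) hW' (fun h => hWV h.symm))⟩
  sup_parts := by
    have hVe : V ∈ P.parts.erase U := mem_erase.2 ⟨fun h => hUV h.symm, hV⟩
    have h1 : insert V ((P.parts.erase U).erase V) = P.parts.erase U := insert_erase hVe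
    have h2 : insert U (P.parts.erase U) = P.parts := insert_erase hU
    calc (insert (U ∪ V) ((P.parts.erase U).erase V)).sup id
        = (U ∪ V) ⊔ ((P.parts.erase U).erase V).sup id := Finset.sup_insert
      _ = U ⊔ (V ⊔ ((P.parts.erase U).erase V).sup id) := by
          rw [← sup_assoc]; rfl
      _ = U ⊔ (insert V ((P.parts.erase U).erase V)).sup id := by rw [Finset.sup_insert]; rfl
      _ = (insert U (P.parts.erase U)).sup id := by rw [h1, Finset.sup_insert]; rfl
      _ = s := by rw [h2, P.sup_parts]
  bot_notMem := by
    simp only [mem_insert, not_or]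
    constructor
    · intro h
      obtain ⟨x, hx⟩ := P.nonempty_of_mem_parts hU
      have : x ∈ (⊥ : Finset ℕ) := h ▸ mem_union_left _ hx
      simp at this
    · intro h
      exact P.bot_notMem (mem_of_mem_erase (mem_of_mem_erase h))

lemma chMerge_parts {P : Finpartition s} {U V : Finset ℕ} {hU : U ∈ P.parts} {hV : V ∈ P.parts}
    {hUV : U ≠ V} :
    (chMerge P U V hU hV hUV).parts = insert (U ∪ V) ((P.parts.erase U).erase V) := rfl

lemma union_not_mem_parts {P : Finpartition s} {U V : Finset ℕ} (hU : U ∈ P.parts)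
    (hV : V ∈ P.parts) (hUV : U ≠ V) : U ∪ V ∉ P.parts := by
  intro h
  obtain ⟨x, hx⟩ := P.nonempty_of_mem_parts hU
  obtain ⟨y, hy⟩ := P.nonempty_of_mem_parts hV
  have h1 : U ∪ V = U := P.eq_of_mem_parts h hU (mem_union_left _ hx) hx
  have h2 : V = U := P.eq_of_mem_parts hV hU hy (h1 ▸ mem_union_right _ hy)
  exact hUV h2.symm

lemma le_chMerge {P : Finpartition s} {U V : Finset ℕ} (hU : U ∈ P.parts) (hV : V ∈ P.parts)
    (hUV : U ≠ V) : P ≤ chMerge P U V hU hV hUV := by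
  intro W hW
  by_cases hWU : W = U
  · exact ⟨U ∪ V, mem_insert_self _ _, hWU ▸ subset_union_left⟩
  by_cases hWV : W = V
  · exact ⟨U ∪ V, mem_insert_self _ _, hWV ▸ subset_union_right⟩
  · exact ⟨W, mem_insert_of_mem (mem_erase.2 ⟨hWV, mem_erase.2 ⟨hWU, hW⟩⟩), le_refl _⟩

lemma chMerge_card {P : Finpartition s} {U V : Finset ℕ} (hU : U ∈ P.parts) (hV : V ∈ P.parts)
    (hUV : U ≠ V) : (chMerge P U V hU hV hUV).parts.card + 1 = P.parts.card := by
  have hVe : V ∈ P.parts.erase U := mem_erase.2 ⟨fun h => hUV h.symm, hV⟩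
  have hUVnotin : U ∪ V ∉ (P.parts.erase U).erase V := by
    intro h
    exact union_not_mem_parts hU hV hUV (mem_of_mem_erase (mem_of_mem_erase h))
  rw [chMerge_parts, card_insert_of_notMem hUVnotin, card_erase_of_mem hVe, card_erase_of_mem hU]
  have h2 : 2 ≤ P.parts.card := by
    refine one_lt_card.2 ⟨U, hU, V, hV, hUV⟩
  omega

lemma chMerge_covBy {P : Finpartition s} {U V : Finset ℕ} (hU : U ∈ P.parts) (hV : V ∈ P.parts)
    (hUV : U ≠ V) : P ⋖ chMerge P U V hU hV hUV := by
  have hle := le_chMerge hU hV hUV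
  have hcard := chMerge_card hU hV hUV
  have hne : P ≠ chMerge P U V hU hV hUV := by
    intro h
    rw [← h] at hcard
    omega
  refine ⟨lt_of_le_of_ne hle hne, ?_⟩
  intro R hPR hRQ
  have h1 : R.parts.card ≤ P.parts.card := card_le_of_le hPR.le
  have h2 : (chMerge P U V hU hV hUV).parts.card ≤ R.parts.card := card_le_of_le hRQ.le
  have h3 : R.parts.card ≠ P.parts.card := by
    intro h
    exact hPR.ne (eq_of_le_of_card_le hPR.le (le_of_eq h.symm))
  have h4 : R.parts.card = (chMerge P U V hU hV hUV).parts.card := by omega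
  exact hRQ.ne (eq_of_le_of_card_le hRQ.le (le_of_eq h4))

lemma chMins_chMerge {P : Finpartition s} {U V : Finset ℕ} (hU : U ∈ P.parts)
    (hV : V ∈ P.parts) (hUV : U ≠ V) (hlt : chMin U < chMin V) :
    chMins (chMerge P U V hU hV hUV) = (chMins P).erase (chMin V) := by
  have hUne := P.nonempty_of_mem_parts hU
  have hVne := P.nonempty_of_mem_parts hV
  have hmUV : chMin (U ∪ V) = chMin U := by
    rw [chMin_union hUne hVne, min_eq_left hlt.le]
  ext y
  simp only [chMins, chMerge_parts, image_insert, mem_insert, mem_image, mem_erase, hmUV]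
  constructor
  · rintro (rfl | ⟨W, hW, rfl⟩)
    · exact ⟨ne_of_lt hlt, ⟨U, hU, rfl⟩⟩
    · obtain ⟨hWV, hWU, hWp⟩ := hW
      refine ⟨?_, ⟨W, hWp, rfl⟩⟩
      intro h
      exact hWV (chMin_injOn P hWp hV h)
  · rintro ⟨hne, ⟨W, hW, rfl⟩⟩
    by_cases hWU : W = U
    · left; rw [hWU]
    by_cases hWV : W = V
    · exact absurd (hWV ▸ rfl) hne
    · exact Or.inr ⟨W, ⟨hWV, hWU, hW⟩, rfl⟩

lemma H_chMerge {n : ℕ} {P : Finpartition (Finset.range (n + 1))} {U V : Finset ℕ}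
    (hU : U ∈ P.parts) (hV : V ∈ P.parts) (hUV : U ≠ V) (hlt : chMin U < chMin V) :
    H (chMerge P U V hU hV hUV) = insert (chMin V) (H P) := by
  rw [H_eq, H_eq, chMins_chMerge hU hV hUV hlt]
  have hVs : chMin V ∈ Finset.range (n + 1) := P.le hV (chMin_mem_of_parts hV)
  have hVmins : chMin V ∈ chMins P := mem_image.2 ⟨V, hV, rfl⟩
  ext y
  simp only [mem_sdiff, mem_erase, mem_insert, not_and]
  by_cases hy : y = chMin V
  · subst hy; simp [hVs, hVmins]
  · simp only [hy, false_or, not_false_iff, true_implies]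
    tauto

lemma chMerge_part_of_mem_right {P : Finpartition s} {U V : Finset ℕ} (hU : U ∈ P.parts)
    (hV : V ∈ P.parts) (hUV : U ≠ V) {x : ℕ} (hx : x ∈ V) :
    (chMerge P U V hU hV hUV).part x = U ∪ V :=
  Finpartition.part_eq_of_mem _ (mem_insert_self _ _) (mem_union_right _ hx)
end Part2
section Part3
variable {s : Finset ℕ}

lemma chStruct {P Q : Finpartition s} (hPQ : P ≤ Q) (hcard : Q.parts.card + 1 = P.parts.card)
    {x : ℕ} (hx : x ∈ s) (hPx : chMin (P.part x) = x) (hQx : chMin (Q.part x) ≠ x) :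
    Q.parts = insert ((P.part (chMin (Q.part x))) ∪ (P.part x))
      ((P.parts.erase (P.part (chMin (Q.part x)))).erase (P.part x)) := by
  classical
  set q₀ := Q.part x with hq₀def
  set m := chMin q₀ with hmdef
  set W := P.part m with hWdef
  set V := P.part x with hVdef
  have hq₀ : q₀ ∈ Q.parts := Q.part_mem.2 hx
  have hxq₀ : x ∈ q₀ := Q.mem_part hx
  have hmq₀ : m ∈ q₀ := chMin_mem_of_parts hq₀
  have hms : m ∈ s := Q.le hq₀ hmq₀
  have hV : V ∈ P.parts := P.part_mem.2 hx
  have hxV : x ∈ V := P.mem_part hx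
  have hW : W ∈ P.parts := P.part_mem.2 hms
  have hmW : m ∈ W := P.mem_part hms
  -- φ U := Q.part (chMin U)
  have hφV : Q.part (chMin V) = q₀ := by
    have h2 := subset_part_chMin hPQ hV
    exact Q.eq_of_mem_parts h2.1 hq₀ (h2.2 hxV) hxq₀
  have hφW : Q.part (chMin W) = q₀ := by
    have h2 := subset_part_chMin hPQ hW
    exact Q.eq_of_mem_parts h2.1 hq₀ (h2.2 hmW) hmq₀
  have hWV : W ≠ V := by
    intro h
    apply hQx
    have hmV : m ∈ V := h ▸ hmW
    have h1 : x ≤ m := hPx ▸ chMin_le hmV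
    have h2 : m ≤ x := chMin_le hxq₀
    omega
  -- fibers
  have hmaps : ∀ U ∈ P.parts, Q.part (chMin U) ∈ Q.parts := fun U hU => (subset_part_chMin hPQ hU).1
  have hsum : P.parts.card = ∑ q ∈ Q.parts, ((P.parts.filter fun U => Q.part (chMin U) = q).card) :=
    card_eq_sum_card_fiberwise hmaps
  have hone : ∀ q ∈ Q.parts, 1 ≤ (P.parts.filter fun U => Q.part (chMin U) = q).card := by
    intro q hq
    obtain ⟨U, hU, hUq⟩ := part_chMin_surj hPQ hq
    exact card_pos.2 ⟨U, mem_filter.2 ⟨hU, hUq⟩⟩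
  have hWfib : W ∈ P.parts.filter fun U => Q.part (chMin U) = q₀ := mem_filter.2 ⟨hW, hφW⟩
  have hVfib : V ∈ P.parts.filter fun U => Q.part (chMin U) = q₀ := mem_filter.2 ⟨hV, hφV⟩
  have htwo : 2 ≤ (P.parts.filter fun U => Q.part (chMin U) = q₀).card :=
    one_lt_card.2 ⟨W, hWfib, V, hVfib, hWV⟩
  have hg : ∀ q ∈ Q.parts, (if q = q₀ then 2 else 1) ≤ (P.parts.filter fun U => Q.part (chMin U) = q).card := by
    intro q hq
    by_cases h : q = q₀
    · rw [if_pos h, h]; exact htwo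
    · rw [if_neg h]; exact hone q hq
  have hgsum : ∑ q ∈ Q.parts, (if q = q₀ then 2 else 1) = Q.parts.card + 1 := by
    have : ∀ q : Finset ℕ, (if q = q₀ then 2 else 1) = 1 + (if q = q₀ then 1 else 0) := by
      intro q; by_cases h : q = q₀ <;> simp [h]
    simp_rw [this]
    rw [Finset.sum_add_distrib, Finset.sum_ite_eq' Q.parts q₀ (fun _ => 1), if_pos hq₀]
    simp
  have heq : ∀ q ∈ Q.parts, (if q = q₀ then 2 else 1) = (P.parts.filter fun U => Q.part (chMin U) = q).card := by
    rw [← Finset.sum_eq_sum_iff_of_le hg, hgsum]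
    omega
  -- fiber of q₀ is {W, V}
  have hfib₀ : (P.parts.filter fun U => Q.part (chMin U) = q₀) = {W, V} := by
    have hsub : ({W, V} : Finset (Finset ℕ)) ⊆ P.parts.filter fun U => Q.part (chMin U) = q₀ := by
      intro y hy
      rcases mem_insert.1 hy with rfl | hy
      · exact hWfib
      · rw [mem_singleton.1 hy]; exact hVfib
    refine (eq_of_subset_of_card_le hsub ?_).symm
    have h2 := heq q₀ hq₀
    rw [if_pos rfl] at h2
    rw [← h2, card_insert_of_notMem (by simp [hWV]), card_singleton]
  -- every fiber element is contained in its q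
  have hfib_sub : ∀ q ∈ Q.parts, ∀ U ∈ P.parts, Q.part (chMin U) = q → U ⊆ q := by
    intro q _ U hU hUq
    have h2 := subset_part_chMin hPQ hU
    exact hUq ▸ h2.2
  -- every element of q is in some fiber element
  have hfib_cov : ∀ q ∈ Q.parts, ∀ y ∈ q, ∃ U ∈ P.parts, Q.part (chMin U) = q ∧ y ∈ U := by
    intro q hq y hy
    have hys : y ∈ s := Q.le hq hy
    obtain ⟨U, hU, hyU⟩ := P.exists_mem hys
    have h2 := subset_part_chMin hPQ hU
    exact ⟨U, hU, Q.eq_of_mem_parts h2.1 hq (h2.2 hyU) hy, hyU⟩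
  have hq₀eq : q₀ = W ∪ V := by
    apply Finset.Subset.antisymm
    · intro y hy
      obtain ⟨U, hU, hUq, hyU⟩ := hfib_cov q₀ hq₀ y hy
      have : U ∈ ({W, V} : Finset (Finset ℕ)) := hfib₀ ▸ mem_filter.2 ⟨hU, hUq⟩
      rcases mem_insert.1 this with rfl | h
      · exact mem_union_left _ hyU
      · exact mem_union_right _ (mem_singleton.1 h ▸ hyU)
    · rw [Finset.union_subset_iff]
      exact ⟨hfib_sub q₀ hq₀ W hW hφW, hfib_sub q₀ hq₀ V hV hφV⟩
  -- singleton fibers: q = U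
  have hsing : ∀ q ∈ Q.parts, q ≠ q₀ → ∃ U ∈ P.parts, Q.part (chMin U) = q ∧ q = U := by
    intro q hq hne
    have h2 := heq q hq
    rw [if_neg hne] at h2
    obtain ⟨U, hUfil⟩ := card_eq_one.1 h2.symm
    have hUmem : U ∈ P.parts ∧ Q.part (chMin U) = q := by
      have h1 : U ∈ P.parts.filter fun U' => Q.part (chMin U') = q := by
        rw [hUfil]; exact mem_singleton_self U
      exact mem_filter.1 h1
    refine ⟨U, hUmem.1, hUmem.2, ?_⟩
    apply Finset.Subset.antisymm
    · intro y hy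
      obtain ⟨U', hU', hU'q, hyU'⟩ := hfib_cov q hq y hy
      have : U' ∈ ({U} : Finset (Finset ℕ)) := hUfil ▸ mem_filter.2 ⟨hU', hU'q⟩
      exact mem_singleton.1 this ▸ hyU'
    · exact hfib_sub q hq U hUmem.1 hUmem.2
  -- final extensionality
  ext r
  simp only [mem_insert, mem_erase]
  constructor
  · intro hr
    by_cases h : r = q₀
    · left; rw [h, hq₀eq]
    · obtain ⟨U, hU, hUq, rfl⟩ := hsing r hr h
      right
      refine ⟨?_, ?_, hU⟩
      · intro hUV'
        apply h
        rw [← hUq, hUV', hφV]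
      · intro hUW
        apply h
        rw [← hUq, hUW, hφW]
  · rintro (rfl | ⟨hrV, hrW, hr⟩)
    · rw [← hq₀eq]; exact hq₀
    · have hφr := (subset_part_chMin hPQ hr).1
      by_cases h : Q.part (chMin r) = q₀
      · exfalso
        have : r ∈ ({W, V} : Finset (Finset ℕ)) := hfib₀ ▸ mem_filter.2 ⟨hr, h⟩
        rcases mem_insert.1 this with rfl | h'
        · exact hrW rfl
        · exact hrV (mem_singleton.1 h')
      · obtain ⟨U, hU, hUq, hqU⟩ := hsing _ hφr h
        have hrfib : r ∈ P.parts.filter fun U' => Q.part (chMin U') = Q.part (chMin r) :=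
          mem_filter.2 ⟨hr, rfl⟩
        have h2 := heq _ hφr
        rw [if_neg h] at h2
        obtain ⟨U', hU'fil⟩ := card_eq_one.1 h2.symm
        have hrU' : r = U' := mem_singleton.1 (hU'fil ▸ hrfib)
        have hUU' : U = U' := mem_singleton.1 (hU'fil ▸ mem_filter.2 ⟨hU, hUq⟩)
        rw [hqU, hUU', ← hrU'] at hφr
        exact hφr
end Part3
section Part4

lemma part_min_of_not_H {n : ℕ} {P : Finpartition (Finset.range (n + 1))} {m : ℕ}
    (hm : m ∈ Finset.range (n + 1)) (h : m ∉ H P) :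
    P.part m ∈ P.parts ∧ chMin (P.part m) = m :=
  ⟨P.part_mem.2 hm, (mem_chMins_iff hm).1 (by rw [chMins_eq]; exact mem_sdiff.2 ⟨hm, h⟩)⟩

lemma min_part_ne_of_H {n : ℕ} {P : Finpartition (Finset.range (n + 1))} {m : ℕ}
    (hm : m ∈ Finset.range (n + 1)) (h : m ∈ H P) : chMin (P.part m) ≠ m := by
  intro he
  have : m ∈ chMins P := (mem_chMins_iff hm).2 he
  rw [chMins_eq, mem_sdiff] at this
  exact this.2 h

/-- Total version of `chMerge`. -/
def chMerge' {s : Finset ℕ} (P : Finpartition s) (U V : Finset ℕ) : Finpartition s :=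
  if h : U ∈ P.parts ∧ V ∈ P.parts ∧ U ≠ V then chMerge P U V h.1 h.2.1 h.2.2 else P

lemma chMerge'_eq {s : Finset ℕ} {P : Finpartition s} {U V : Finset ℕ} (hU : U ∈ P.parts)
    (hV : V ∈ P.parts) (hUV : U ≠ V) : chMerge' P U V = chMerge P U V hU hV hUV :=
  dif_pos ⟨hU, hV, hUV⟩

/-- The predicate for a partial chain of length `k`. -/
def chPred (n : ℕ) (A : Fin (n + 1) → Finset ℕ) (k : ℕ) (hk : k ≤ n)
    (d : Fin (n + 1) → Finpartition (Finset.range (n + 1))) : Prop :=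
  d 0 = ⊥ ∧ (∀ i : Fin n, i.1 < k → d i.castSucc ⋖ d i.succ) ∧
    (∀ j : Fin (n + 1), j.1 ≤ k → H (d j) = A j) ∧
    ∀ j : Fin (n + 1), k ≤ j.1 → d j = d ⟨k, by omega⟩

def chT (n : ℕ) (A : Fin (n + 1) → Finset ℕ) (k : ℕ) (hk : k ≤ n) : Type :=
  {d : Fin (n + 1) → Finpartition (Finset.range (n + 1)) // chPred n A k hk d}

section StepCtx

variable {n k : ℕ} (hk : k + 1 ≤ n) {A : Fin (n + 1) → Finset ℕ} {x : ℕ}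

lemma chPred_trunc (d : Fin (n + 1) → Finpartition (Finset.range (n + 1)))
    (hd : chPred n A (k + 1) hk d) :
    chPred n A k (by omega) (fun j => if j.1 ≤ k then d j else d ⟨k, by omega⟩) := by
  obtain ⟨h0, hcov, hH, hconst⟩ := hd
  refine ⟨?_, ?_, ?_, ?_⟩
  · simp only [Fin.val_zero, Nat.zero_le, if_pos]
    exact h0
  · intro i hi
    simp only [Fin.coe_castSucc, Fin.val_succ]
    rw [if_pos (by omega), if_pos (by omega)]
    exact hcov i (by omega)
  · intro j hj
    simp only
    rw [if_pos hj]
    exact hH j (by omega)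
  · intro j hj
    simp only [show ((⟨k, by omega⟩ : Fin (n + 1)) : Fin (n + 1)).1 ≤ k from le_refl k, if_pos]
    by_cases h : j.1 ≤ k
    · rw [if_pos h]
      have : j = ⟨k, by omega⟩ := Fin.ext (show j.1 = k by omega)
      rw [this]
    · rw [if_neg h]

lemma chPred_extend (hxr : x ∈ Finset.range (n + 1))
    (hxA : x ∉ A ⟨k, by omega⟩) (hA : A ⟨k + 1, by omega⟩ = insert x (A ⟨k, by omega⟩))
    (e : Fin (n + 1) → Finpartition (Finset.range (n + 1)))
    (he : chPred n A k (by omega) e) {m : ℕ}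
    (hm : m ∈ (Finset.range (n + 1) \ A ⟨k, by omega⟩).filter (· < x)) :
    chPred n A (k + 1) hk (fun j => if j.1 ≤ k then e j
      else chMerge' (e ⟨k, by omega⟩) ((e ⟨k, by omega⟩).part m) ((e ⟨k, by omega⟩).part x)) := by
  obtain ⟨h0, hcov, hH, hconst⟩ := he
  set P := e ⟨k, by omega⟩ with hPdef
  have hHP : H P = A ⟨k, by omega⟩ := hH ⟨k, by omega⟩ (le_refl k)
  have hmM := mem_filter.1 hm
  have hmr : m ∈ Finset.range (n + 1) := (mem_sdiff.1 hmM.1).1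
  have hmA : m ∉ A ⟨k, by omega⟩ := (mem_sdiff.1 hmM.1).2
  have hmx : m < x := hmM.2
  have hW := part_min_of_not_H hmr (hHP ▸ hmA)
  have hV := part_min_of_not_H hxr (hHP ▸ hxA)
  have hWV : P.part m ≠ P.part x := fun h => by
    rw [h, hV.2] at hW
    omega
  have hmer : chMerge' P (P.part m) (P.part x) = chMerge P (P.part m) (P.part x) hW.1 hV.1 hWV :=
    chMerge'_eq hW.1 hV.1 hWV
  have hlt : chMin (P.part m) < chMin (P.part x) := by rw [hW.2, hV.2]; exact hmx
  refine ⟨?_, ?_, ?_, ?_⟩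
  · simp only [Fin.val_zero, Nat.zero_le, if_pos]
    exact h0
  · intro i hi
    simp only [Fin.coe_castSucc, Fin.val_succ]
    by_cases h : i.1 < k
    · rw [if_pos (by omega), if_pos (by omega)]
      exact hcov i h
    · have hik : i.1 = k := by omega
      rw [if_pos (by omega), if_neg (by omega), hmer]
      have : i.castSucc = ⟨k, by omega⟩ := Fin.ext (show i.castSucc.1 = k by simp [hik])
      rw [this]
      exact chMerge_covBy hW.1 hV.1 hWV
  · intro j hj
    simp only
    by_cases h : j.1 ≤ k
    · rw [if_pos h]
      exact hH j h
    · have hjk : j.1 = k + 1 := by omega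
      have hjK : j = ⟨k + 1, by omega⟩ := Fin.ext (show j.1 = k + 1 by omega)
      rw [if_neg h, hmer, H_chMerge hW.1 hV.1 hWV hlt, hV.2, hjK, hA, hHP]
  · intro j hj
    show (if (j : ℕ) ≤ k then e j else chMerge' P (P.part m) (P.part x)) =
      (if ((⟨k + 1, by omega⟩ : Fin (n + 1)) : ℕ) ≤ k then e ⟨k + 1, by omega⟩
        else chMerge' P (P.part m) (P.part x))
    rw [if_neg (by omega), if_neg (show ¬(k + 1 ≤ k) by omega)]

end StepCtx
end Part4
section Part5

lemma chT_zero {n : ℕ} (A : Fin (n + 1) → Finset ℕ) (hA0 : A 0 = ∅) :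
    Nat.card (chT n A 0 (Nat.zero_le n)) = 1 := by
  rw [Nat.card_eq_one_iff_unique]
  constructor
  · constructor
    intro d e
    apply Subtype.ext
    funext j
    have hd := d.2.2.2.2 j (Nat.zero_le _)
    have he := e.2.2.2.2 j (Nat.zero_le _)
    have h0 : (⟨0, by omega⟩ : Fin (n + 1)) = 0 := Fin.ext (by simp)
    rw [hd, he, h0, d.2.1, e.2.1]
  · refine ⟨⟨fun _ => ⊥, rfl, fun i hi => absurd hi (by omega), fun j hj => ?_, fun j hj => rfl⟩⟩
    have : j = 0 := Fin.ext (by simp only [Fin.val_zero]; omega)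
    rw [this, hA0, H_bot]

lemma chT_step {n k : ℕ} (hk : k + 1 ≤ n) (A : Fin (n + 1) → Finset ℕ) (x : ℕ)
    (hxr : x ∈ Finset.range (n + 1)) (hxA : x ∉ A ⟨k, by omega⟩)
    (hA : A ⟨k + 1, by omega⟩ = insert x (A ⟨k, by omega⟩)) :
    Nat.card (chT n A (k + 1) hk) =
      Nat.card (chT n A k (by omega : k ≤ n)) *
        ((Finset.range (n + 1) \ A ⟨k, by omega⟩).filter (· < x)).card := by
  classical
  have hmOf : ∀ d : chT n A (k + 1) hk, chMin ((d.1 ⟨k + 1, by omega⟩).part x) ∈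
      (Finset.range (n + 1) \ A ⟨k, by omega⟩).filter (· < x) := by
    intro d
    obtain ⟨h0, hcov, hH, hconst⟩ := d.2
    have hHQ : H (d.1 ⟨k + 1, by omega⟩) = A ⟨k + 1, by omega⟩ := hH _ (le_refl _)
    have hq₀ : (d.1 ⟨k + 1, by omega⟩).part x ∈ (d.1 ⟨k + 1, by omega⟩).parts :=
      (Finpartition.part_mem _).2 hxr
    have hmins : chMin ((d.1 ⟨k + 1, by omega⟩).part x) ∈ chMins (d.1 ⟨k + 1, by omega⟩) :=
      mem_image.2 ⟨_, hq₀, rfl⟩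
    rw [chMins_eq, hHQ, hA] at hmins
    rw [mem_sdiff, mem_insert, not_or] at hmins
    have hle : chMin ((d.1 ⟨k + 1, by omega⟩).part x) ≤ x :=
      chMin_le (Finpartition.mem_part _ hxr)
    rw [mem_filter, mem_sdiff]
    exact ⟨⟨hmins.1, hmins.2.2⟩, lt_of_le_of_ne hle hmins.2.1⟩
  have e : chT n A (k + 1) hk ≃ chT n A k (by omega) ×
      ↥((Finset.range (n + 1) \ A ⟨k, by omega⟩).filter (· < x)) :=
    { toFun := fun d => (⟨fun j => if j.1 ≤ k then d.1 j else d.1 ⟨k, by omega⟩,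
          chPred_trunc hk d.1 d.2⟩,
        ⟨chMin ((d.1 ⟨k + 1, by omega⟩).part x), hmOf d⟩)
      invFun := fun p => ⟨fun j => if j.1 ≤ k then p.1.1 j
          else chMerge' (p.1.1 ⟨k, by omega⟩) ((p.1.1 ⟨k, by omega⟩).part p.2.1)
            ((p.1.1 ⟨k, by omega⟩).part x),
        chPred_extend hk hxr hxA hA p.1.1 p.1.2 p.2.2⟩
      left_inv := by
        intro d
        obtain ⟨h0, hcov, hH, hconst⟩ := d.2
        apply Subtype.ext
        funext j
        dsimp only
        by_cases hj : j.1 ≤ k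
        · rw [if_pos hj, if_pos hj]
        · rw [if_neg hj, if_pos (le_refl k)]
          rw [hconst j (by omega)]
          -- now: chMerge' P (P.part m) (P.part x) = Q
          have hHP : H (d.1 ⟨k, by omega⟩) = A ⟨k, by omega⟩ := hH _ (show k ≤ k + 1 by omega)
          have hHQ : H (d.1 ⟨k + 1, by omega⟩) = A ⟨k + 1, by omega⟩ := hH _ (le_refl _)
          have hPQ : d.1 ⟨k, by omega⟩ ≤ d.1 ⟨k + 1, by omega⟩ := by
            have hc := hcov ⟨k, by omega⟩ (show k < k + 1 by omega)
            have h1 : (⟨k, by omega⟩ : Fin n).castSucc = (⟨k, by omega⟩ : Fin (n + 1)) :=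
              Fin.ext rfl
            have h2 : (⟨k, by omega⟩ : Fin n).succ = (⟨k + 1, by omega⟩ : Fin (n + 1)) :=
              Fin.ext rfl
            rw [h1, h2] at hc
            exact hc.le
          have hcard : (d.1 ⟨k + 1, by omega⟩).parts.card + 1 =
              (d.1 ⟨k, by omega⟩).parts.card := by
            have c1 := H_card (d.1 ⟨k, by omega⟩)
            have c2 := H_card (d.1 ⟨k + 1, by omega⟩)
            rw [hHP] at c1
            rw [hHQ, hA, card_insert_of_notMem hxA] at c2
            omega
          have hPx : chMin ((d.1 ⟨k, by omega⟩).part x) = x :=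
            (part_min_of_not_H hxr (by rw [hHP]; exact hxA)).2
          have hQx : chMin ((d.1 ⟨k + 1, by omega⟩).part x) ≠ x :=
            min_part_ne_of_H hxr (by rw [hHQ, hA]; exact mem_insert_self _ _)
          have hstruct := chStruct hPQ hcard hxr hPx hQx
          have hmM := hmOf d
          rw [mem_filter, mem_sdiff] at hmM
          have hW := part_min_of_not_H hmM.1.1 (by rw [hHP]; exact hmM.1.2)
          have hV := part_min_of_not_H hxr (by rw [hHP]; exact hxA)
          have hWVne : (d.1 ⟨k, by omega⟩).part (chMin ((d.1 ⟨k + 1, by omega⟩).part x)) ≠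
              (d.1 ⟨k, by omega⟩).part x := by
            intro h
            rw [h, hV.2] at hW
            have := hmM.2
            omega
          rw [chMerge'_eq hW.1 hV.1 hWVne]
          refine (Finpartition.ext ?_).symm
          rw [chMerge_parts, hstruct]
      right_inv := by
        rintro ⟨⟨efun, h0, hcov, hH, hconst⟩, ⟨m, hmM⟩⟩
        have hHP : H (efun ⟨k, by omega⟩) = A ⟨k, by omega⟩ := hH _ (le_refl k)
        rw [mem_filter, mem_sdiff] at hmM
        have hW := part_min_of_not_H hmM.1.1 (by rw [hHP]; exact hmM.1.2)
        have hV := part_min_of_not_H hxr (by rw [hHP]; exact hxA)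
        have hWVne : (efun ⟨k, by omega⟩).part m ≠ (efun ⟨k, by omega⟩).part x := by
          intro h
          rw [h, hV.2] at hW
          have := hmM.2
          omega
        apply Prod.ext
        · apply Subtype.ext
          funext j
          dsimp only
          by_cases hj : j.1 ≤ k
          · rw [if_pos hj, if_pos hj]
          · rw [if_neg hj, if_pos (le_refl k)]
            exact (hconst j (by omega)).symm
        · apply Subtype.ext
          dsimp only
          rw [if_neg (show ¬(k + 1 ≤ k) by omega)]
          rw [chMerge'_eq hW.1 hV.1 hWVne,
            chMerge_part_of_mem_right hW.1 hV.1 hWVne (Finpartition.mem_part _ hxr)]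
          rw [chMin_union (Finpartition.nonempty_of_mem_parts _ hW.1)
            (Finpartition.nonempty_of_mem_parts _ hV.1), hW.2, hV.2]
          exact min_eq_left (le_of_lt hmM.2) }
  rw [Nat.card_congr e, Nat.card_prod, Nat.card_eq_finsetCard]

end Part5

theorem stmt_17 (n : ℕ) (A : Fin (n + 1) → Finset ℕ) (a : Fin n → ℕ)
    (h0 : A 0 = ∅)
    (hstep : ∀ i : Fin n, a i ∉ A i.castSucc ∧ A i.succ = insert (a i) (A i.castSucc))
    (htop : A (Fin.last n) = Finset.Icc 1 n)
    (c : Fin (n + 1) → Finpartition (Finset.range (n + 1)))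
    (hc0 : c 0 = ⊥) (hccov : ∀ i : Fin n, c i.castSucc ⋖ c i.succ)
    (hcH : ∀ k : Fin (n + 1), H (c k) = A k) :
    Nat.card {d : Fin (n + 1) → Finpartition (Finset.range (n + 1)) //
        d 0 = ⊥ ∧ (∀ i : Fin n, d i.castSucc ⋖ d i.succ) ∧ ∀ k : Fin (n + 1), H (d k) = A k} =
      ∏ i : Fin n, ((c i.castSucc).parts.filter fun U => ∃ m ∈ U, m < a i).card := by
  classical
  -- every A j is contained in Icc 1 n
  have claim : ∀ t : ℕ, ∀ j : Fin (n + 1), j.1 + t = n → A j ⊆ Finset.Icc 1 n := by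
    intro t
    induction t with
    | zero =>
      intro j hj
      have : j = Fin.last n := Fin.ext (show j.1 = n by omega)
      rw [this, htop]
    | succ t ih =>
      intro j hj
      have hjn : j.1 < n := by omega
      have h1 := (hstep ⟨j.1, hjn⟩).2
      have hcs : (⟨j.1, hjn⟩ : Fin n).castSucc = j := Fin.ext rfl
      rw [hcs] at h1
      intro y hy
      exact ih (⟨j.1, hjn⟩ : Fin n).succ (show j.1 + 1 + t = n by omega)
        (h1 ▸ Finset.mem_insert_of_mem hy)
  have hsub : ∀ j : Fin (n + 1), A j ⊆ Finset.Icc 1 n := fun j =>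
    claim (n - j.1) j (by omega)
  have harange : ∀ i : Fin n, a i ∈ Finset.range (n + 1) := by
    intro i
    have h1 : a i ∈ A i.succ := (hstep i).2 ▸ Finset.mem_insert_self _ _
    have h2 := Finset.mem_Icc.1 (hsub i.succ h1)
    rw [Finset.mem_range]
    omega
  -- the counting induction
  have key : ∀ k : ℕ, ∀ hk : k ≤ n, Nat.card (chT n A k hk) =
      ∏ i ∈ Finset.range k, (if h : i < n then
        ((Finset.range (n + 1) \ A ⟨i, Nat.lt_succ_of_lt h⟩).filter (· < a ⟨i, h⟩)).card else 1) := by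
    intro k
    induction k with
    | zero => intro hk; simpa using chT_zero A h0
    | succ k ih =>
      intro hk
      have hklt : k < n := hk
      have hs1 := (hstep ⟨k, hklt⟩).1
      have hs2 := (hstep ⟨k, hklt⟩).2
      rw [chT_step hk A (a ⟨k, hklt⟩) (harange ⟨k, hklt⟩) hs1 hs2, ih (by omega),
        Finset.prod_range_succ, dif_pos hklt]
  -- relate the target to chT n A n
  have htar : Nat.card {d : Fin (n + 1) → Finpartition (Finset.range (n + 1)) //
        d 0 = ⊥ ∧ (∀ i : Fin n, d i.castSucc ⋖ d i.succ) ∧ ∀ k : Fin (n + 1), H (d k) = A k}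
      = Nat.card (chT n A n (le_refl n)) := by
    apply Nat.card_congr
    apply Equiv.subtypeEquivRight
    intro d
    constructor
    · rintro ⟨hd0, hdcov, hdH⟩
      refine ⟨hd0, fun i _ => hdcov i, fun j _ => hdH j, fun j hj => ?_⟩
      have : j = ⟨n, by omega⟩ := Fin.ext (le_antisymm (Nat.lt_succ_iff.mp j.isLt) hj)
      rw [this]
    · rintro ⟨hd0, hdcov, hdH, hdconst⟩
      exact ⟨hd0, fun i => hdcov i i.2, fun j => hdH j (Nat.lt_succ_iff.mp j.isLt)⟩
  rw [htar, key n (le_refl n),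
    ← Fin.prod_univ_eq_prod_range (fun i => if h : i < n then
      ((Finset.range (n + 1) \ A ⟨i, Nat.lt_succ_of_lt h⟩).filter (· < a ⟨i, h⟩)).card else 1) n]
  apply Finset.prod_congr rfl
  intro i _
  rw [filter_card (c i.castSucc) (a i), chMins_eq (c i.castSucc), hcH i.castSucc,
    dif_pos i.isLt]
  have h1 : (⟨(i : ℕ), i.isLt⟩ : Fin n) = i := Fin.ext rfl
  have h2 : (⟨(i : ℕ), Nat.lt_succ_of_lt i.isLt⟩ : Fin (n + 1)) = i.castSucc := Fin.ext rfl
  rw [h1, h2]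
end
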